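/- With ρ as above (Re(ρ) < 0, Im(ρ) = N/(2π) with N a positive even integer), every zero z = (2p+1)πρ + i(2l+n) − r of B with Im(z) ≤ 0 is also a zero of A; explicitly, z can be rewritten as z = (2p+1)π·conj(ρ) − i(2m+n) − r with m = −(pN + N/2 + l + n) ∈ ℤ≥0. Consequently the quotient t ↦ A(t)/B(t) extends holomorphically to the open lower half-plane. -/

import Mathlib

open Complex Filter Topology Real
set_option maxHeartbeats 1000000
namespace Stmt14Aux


lemma hasProd_zero_of_eq_zero {f : ℕ → ℂ} {k : ℕ} (h : f k = 0) : HasProd f 0 := by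
  have hev : ∀ᶠ s : Finset ℕ in atTop, (0 : ℂ) = ∏ i ∈ s, f i := by
    filter_upwards [eventually_ge_atTop ({k} : Finset ℕ)] with s hs
    exact (Finset.prod_eq_zero (hs (Finset.mem_singleton_self k)) h).symm
  exact (tendsto_const_nhds : Tendsto (fun _ : Finset ℕ => (0:ℂ)) atTop (𝓝 0)).congr' hev

lemma norm_log_le {z : ℂ} (h : ‖z‖ ≤ 1/2) : ‖Complex.log (1+z)‖ ≤ 2*‖z‖ := by
  have h1 : ‖z‖ < 1 := by linarith
  have h2 := Complex.norm_log_one_add_sub_self_le h1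
  have h3 : ‖Complex.log (1+z)‖ ≤ ‖Complex.log (1+z) - z‖ + ‖z‖ := by
    simpa using norm_add_le (Complex.log (1+z) - z) z
  have h4 : (1 - ‖z‖)⁻¹ ≤ 2 := by
    rw [inv_le_comm₀ (by linarith) (by norm_num)]
    linarith
  have h5 : ‖z‖^2 * (1 - ‖z‖)⁻¹ / 2 ≤ ‖z‖ := by
    have h0 : (0:ℝ) ≤ ‖z‖ := norm_nonneg z
    nlinarith
  linarith

variable {q : ℂ} (hq : ‖q‖ < 1) (ε : ℕ → ℂ) (hε : ∀ k, ‖ε k‖ ≤ 1)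

include hq in
lemma summable_aux (x : ℂ) : Summable (fun k : ℕ => 2 * (‖q‖ ^ k * ‖x‖)) :=
  ((summable_geometric_of_lt_one (norm_nonneg q) hq).mul_right ‖x‖).mul_left 2

include hε in
lemma norm_term_le (x : ℂ) (k : ℕ) : ‖ε k * q ^ k * x‖ ≤ ‖q‖ ^ k * ‖x‖ := by
  rw [norm_mul, norm_mul, norm_pow]
  have := hε k
  have h1 : (0:ℝ) ≤ ‖q‖^k := by positivity
  have h2 : (0:ℝ) ≤ ‖x‖ := norm_nonneg x
  nlinarith [norm_nonneg (ε k), mul_nonneg h1 h2, mul_nonneg (mul_nonneg h1 h2) (norm_nonneg (ε k))]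

include hq hε in
lemma summable_log_aux (x : ℂ) :
    Summable (fun k : ℕ => Complex.log (1 + ε k * q ^ k * x)) := by
  apply Summable.of_norm_bounded_eventually (summable_aux hq x)
  rw [Nat.cofinite_eq_atTop]
  have hsmall : ∀ᶠ k : ℕ in atTop, ‖q‖ ^ k * ‖x‖ < 1/2 := by
    apply Tendsto.eventually_lt_const (by norm_num : (0:ℝ) < 1/2)
    simpa using (tendsto_pow_atTop_nhds_zero_of_lt_one (norm_nonneg q) hq).mul_const ‖x‖
  filter_upwards [hsmall] with k hk
  calc ‖Complex.log (1 + ε k * q ^ k * x)‖ ≤ 2 * ‖ε k * q ^ k * x‖ :=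
        norm_log_le (le_trans (norm_term_le (q := q) ε hε x k) (le_of_lt hk))
    _ ≤ 2 * (‖q‖ ^ k * ‖x‖) := by
        have := norm_term_le (q := q) ε hε x k; linarith

include hq hε in
lemma hasProd_exp (x : ℂ) (h : ∀ k, (1 : ℂ) + ε k * q ^ k * x ≠ 0) :
    HasProd (fun k : ℕ => (1 : ℂ) + ε k * q ^ k * x)
      (Complex.exp (∑' k : ℕ, Complex.log (1 + ε k * q ^ k * x))) := by
  have hs := (summable_log_aux hq ε hε x).hasSum.cexp
  have hfun : (cexp ∘ fun k => Complex.log (1 + ε k * q ^ k * x)) =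
      (fun k : ℕ => (1:ℂ) + ε k * q ^ k * x) := funext fun k => Complex.exp_log (h k)
  rw [hfun] at hs; exact hs

include hq hε in
lemma multipliable_aux (x : ℂ) : Multipliable (fun k : ℕ => (1 : ℂ) + ε k * q ^ k * x) := by
  by_cases h : ∀ k, (1 : ℂ) + ε k * q ^ k * x ≠ 0
  · exact (hasProd_exp hq ε hε x h).multipliable
  · push_neg at h
    obtain ⟨k, hk⟩ := h
    exact (hasProd_zero_of_eq_zero hk).multipliable

include hq hε in
lemma tprod_ne_zero (x : ℂ) (h : ∀ k, (1 : ℂ) + ε k * q ^ k * x ≠ 0) :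
    (∏' k : ℕ, ((1 : ℂ) + ε k * q ^ k * x)) ≠ 0 := by
  rw [(hasProd_exp hq ε hε x h).tprod_eq]
  exact Complex.exp_ne_zero _

include hq hε in
lemma exists_factor_zero (x : ℂ) (h : (∏' k : ℕ, ((1 : ℂ) + ε k * q ^ k * x)) = 0) :
    ∃ k, (1 : ℂ) + ε k * q ^ k * x = 0 := by
  by_contra hc
  push_neg at hc
  exact tprod_ne_zero hq ε hε x hc h

include hq hε in
lemma tprod_split (x : ℂ) (k₀ : ℕ) :
    (∏' k : ℕ, ((1:ℂ) + ε k * q ^ k * x)) =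
      (1 + ε k₀ * q ^ k₀ * x) *
        ∏' k : ℕ, ((1:ℂ) + (if k = k₀ then 0 else ε k) * q ^ k * x) := by
  have hε' : ∀ k, ‖(if k = k₀ then (0:ℂ) else ε k)‖ ≤ 1 := by
    intro k
    by_cases h : k = k₀
    · simp [h]
    · simpa [h] using hε k
  have h2 := (multipliable_aux hq _ hε' x).hasProd
  have h1 : HasProd (fun k : ℕ => if k = k₀ then (1 + ε k₀ * q ^ k₀ * x) else 1)
      (1 + ε k₀ * q ^ k₀ * x) := hasProd_ite_eq k₀ _
  have h3 := h1.mul h2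
  have hfun : (fun k : ℕ => (if k = k₀ then (1 + ε k₀ * q ^ k₀ * x) else 1) *
      ((1:ℂ) + (if k = k₀ then (0:ℂ) else ε k) * q ^ k * x)) =
      fun k : ℕ => (1:ℂ) + ε k * q ^ k * x := by
    funext k
    by_cases h : k = k₀ <;> simp [h]
  rw [hfun] at h3
  rw [h3.tprod_eq]

include hq hε in
lemma differentiable_tprod :
    Differentiable ℂ (fun x : ℂ => ∏' k : ℕ, ((1:ℂ) + ε k * q ^ k * x)) := by
  intro x₀
  set R : ℝ := ‖x₀‖ + 1 with hR
  have hR0 : 0 < R := by positivity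
  obtain ⟨K, hKle⟩ : ∃ K : ℕ, ‖q‖ ^ K * R ≤ 1/2 := by
    have ht : Tendsto (fun k : ℕ => ‖q‖ ^ k * R) atTop (𝓝 0) := by
      simpa using (tendsto_pow_atTop_nhds_zero_of_lt_one (norm_nonneg q) hq).mul_const R
    obtain ⟨K, hK⟩ := (ht.eventually_lt_const (by norm_num : (0:ℝ) < 1/2)).exists
    exact ⟨K, hK.le⟩
  set s : Set ℂ := Metric.ball 0 R with hs
  have hs_open : IsOpen s := Metric.isOpen_ball
  have hx₀s : x₀ ∈ s := by
    simp only [hs, Metric.mem_ball, dist_zero_right, hR]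
    linarith
  have hterm_eq : ∀ (j : ℕ) (x : ℂ),
      ε (j + K) * q ^ j * (q ^ K * x) = ε (j + K) * q ^ (j + K) * x := by
    intro j x; rw [pow_add]; ring
  have hcb : ∀ (j : ℕ) (x : ℂ), x ∈ s →
      ‖ε (j + K) * q ^ j * (q ^ K * x)‖ ≤ ‖q‖ ^ j * (‖q‖ ^ K * R) := by
    intro j x hx
    have hxR : ‖x‖ ≤ R := by
      have := Metric.mem_ball.mp hx
      rw [dist_zero_right] at this
      exact this.le
    rw [hterm_eq]
    have h1 : ‖ε (j+K) * q ^ (j+K) * x‖ = ‖ε (j+K)‖ * ‖q‖ ^ (j+K) * ‖x‖ := by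
      rw [norm_mul, norm_mul, norm_pow]
    rw [h1, pow_add]
    have h2 : (0:ℝ) ≤ ‖q‖ ^ j := by positivity
    have h3 : (0:ℝ) ≤ ‖q‖ ^ K := by positivity
    have h4 := hε (j+K)
    have h5 : (0:ℝ) ≤ ‖x‖ := norm_nonneg x
    nlinarith [norm_nonneg (ε (j+K)), mul_nonneg h2 h3, mul_nonneg (mul_nonneg h2 h3) h5]
  have hchalf : ∀ (j : ℕ) (x : ℂ), x ∈ s → ‖ε (j + K) * q ^ j * (q ^ K * x)‖ ≤ 1/2 := by
    intro j x hx
    refine le_trans (hcb j x hx) ?_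
    have h2 : ‖q‖ ^ j ≤ 1 := pow_le_one₀ (norm_nonneg q) hq.le
    nlinarith [pow_nonneg (norm_nonneg q) j, pow_nonneg (norm_nonneg q) K, hR0]
  have hcne : ∀ (j : ℕ) (x : ℂ), x ∈ s → (1:ℂ) + ε (j + K) * q ^ j * (q ^ K * x) ≠ 0 := by
    intro j x hx h0
    have h1 : ‖ε (j + K) * q ^ j * (q ^ K * x)‖ = 1 := by
      have : ε (j + K) * q ^ j * (q ^ K * x) = -1 := by linear_combination h0
      rw [this]; simp
    have := hchalf j x hx
    rw [h1] at this
    linarith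
  set S : ℂ → ℂ := fun x => ∑' j : ℕ, Complex.log (1 + ε (j + K) * q ^ j * (q ^ K * x)) with hS
  have hdiffS : DifferentiableOn ℂ S s := by
    have hu : Summable (fun j : ℕ => 2 * (‖q‖ ^ j * (‖q‖ ^ K * R))) :=
      ((summable_geometric_of_lt_one (norm_nonneg q) hq).mul_right _).mul_left 2
    have hbound : ∀ (j : ℕ), ∀ x ∈ s,
        ‖Complex.log (1 + ε (j + K) * q ^ j * (q ^ K * x))‖ ≤ 2 * (‖q‖ ^ j * (‖q‖ ^ K * R)) := by
      intro j x hx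
      calc ‖Complex.log (1 + ε (j + K) * q ^ j * (q ^ K * x))‖
          ≤ 2 * ‖ε (j + K) * q ^ j * (q ^ K * x)‖ := norm_log_le (hchalf j x hx)
        _ ≤ 2 * (‖q‖ ^ j * (‖q‖ ^ K * R)) := by linarith [hcb j x hx]
    have htu := tendstoUniformlyOn_tsum hu hbound
    apply (htu.tendstoLocallyUniformlyOn.differentiableOn ?_ hs_open)
    apply Eventually.of_forall
    intro t
    apply DifferentiableOn.fun_sum
    intro j _
    intro x hx
    apply DifferentiableAt.differentiableWithinAt
    apply DifferentiableAt.clog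
    · exact (differentiableAt_const _).add ((differentiableAt_id.const_mul (q ^ K)).const_mul _)
    · rw [Complex.mem_slitPlane_iff]
      left
      have h1 : |(ε (j + K) * q ^ j * (q ^ K * x)).re| ≤ ‖ε (j + K) * q ^ j * (q ^ K * x)‖ :=
        Complex.abs_re_le_norm _
      have h2 := hchalf j x hx
      simp only [Complex.add_re, Complex.one_re]
      have := abs_le.mp h1
      linarith
  set g : ℂ → ℂ := fun x => (∏ k ∈ Finset.range K, ((1:ℂ) + ε k * q ^ k * x)) * Complex.exp (S x)
    with hg
  have hdiffg : DifferentiableOn ℂ g s := by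
    apply DifferentiableOn.mul
    · apply Differentiable.differentiableOn
      apply Differentiable.fun_finset_prod
      intro i _
      exact (differentiable_const _).add (differentiable_id.const_mul _)
    · exact hdiffS.cexp
  have heq : ∀ x ∈ s, (∏' k : ℕ, ((1:ℂ) + ε k * q ^ k * x)) = g x := by
    intro x hx
    have hεt : ∀ j, ‖ε (j + K)‖ ≤ 1 := fun j => hε (j + K)
    have htail := hasProd_exp hq (fun j => ε (j + K)) hεt (q ^ K * x)
      (fun j => hcne j x hx)
    have hfun2 : (fun j : ℕ => (1:ℂ) + ε (j + K) * q ^ j * (q ^ K * x)) =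
        (fun j : ℕ => (1:ℂ) + ε (j + K) * q ^ (j + K) * x) := by
      funext j; rw [hterm_eq]
    rw [hfun2] at htail
    have hfull : HasProd (fun k : ℕ => (1:ℂ) + ε k * q ^ k * x)
        ((∏ i ∈ Finset.range K, ((1:ℂ) + ε i * q ^ i * x)) * Complex.exp (S x)) :=
      HasProd.prod_range_mul (f := fun k : ℕ => (1:ℂ) + ε k * q ^ k * x) (k := K) htail
    exact hfull.tprod_eq
  exact (hdiffg.congr heq).differentiableAt (hs_open.mem_nhds hx₀s)

lemma exp_eq_neg_one_iff {w : ℂ} :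
    Complex.exp w = -1 ↔ ∃ p : ℤ, w = (2 * (p:ℂ) + 1) * (π : ℂ) * I := by
  constructor
  · intro h
    have h2 : Complex.exp (w - π * I) = 1 := by
      rw [Complex.exp_sub, h, Complex.exp_pi_mul_I]
      norm_num
    rw [Complex.exp_eq_one_iff] at h2
    obtain ⟨p, hp⟩ := h2
    exact ⟨p, by linear_combination hp⟩
  · rintro ⟨p, rfl⟩
    rw [show (2 * (p:ℂ) + 1) * (π : ℂ) * I = p * (2 * π * I) + π * I by ring,
      Complex.exp_add, Complex.exp_int_mul_two_pi_mul_I, Complex.exp_pi_mul_I]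
    norm_num

lemma key (ρ : ℂ) (N : ℕ) (hN : Even N) (hN0 : 0 < N)
    (him : ρ.im = N / (2 * π)) (n : ℤ) (r : ℝ) :
    ∀ (p l : ℤ), 0 ≤ l → ∀ z : ℂ,
      z = (2 * (p : ℂ) + 1) * (π : ℂ) * ρ + I * (2 * (l : ℂ) + n) - r → z.im ≤ 0 →
      (0 : ℤ) ≤ -(p * (N : ℤ) + (N : ℤ) / 2 + l + n) ∧
      z = (2 * (p : ℂ) + 1) * (π : ℂ) * star ρ -
            I * (2 * ((-(p * (N : ℤ) + (N : ℤ) / 2 + l + n) : ℤ) : ℂ) + n) - r := by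
  obtain ⟨k, hk⟩ := hN
  have hk2 : (N : ℤ) = 2 * k := by push_cast [hk]; ring
  have hNd : (N : ℤ) / 2 = (k : ℤ) := by omega
  have hπ : (0:ℝ) < π := Real.pi_pos
  intro p l hl z hz hzim0
  have hzim : z.im = (2*(p:ℝ)+1) * π * ρ.im + (2*l + n) := by
    rw [hz]
    simp [Complex.add_im, Complex.sub_im, Complex.mul_im, Complex.mul_re,
      Complex.I_re, Complex.I_im, Complex.ofReal_re, Complex.ofReal_im]
  rw [hzim, him] at hzim0
  have hzim1 : (2*(p:ℝ)+1) * π * ((N:ℝ) / (2*π)) + (2*l + n) = (2*(p:ℝ)+1) * (k:ℝ) + (2*l+n) := by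
    have hNR : (N:ℝ) = 2*(k:ℝ) := by exact_mod_cast hk2
    rw [hNR]
    field_simp
  rw [hzim1] at hzim0
  have hint : (2*p+1) * (k:ℤ) + (2*l + n) ≤ 0 := by exact_mod_cast hzim0
  constructor
  · have hexp : (2*p+1) * (k:ℤ) = 2*(p*k) + k := by ring
    rw [hexp] at hint
    rw [hk2]
    have hdd : (2*(k:ℤ))/2 = (k:ℤ) := by omega
    rw [hdd]
    have hpk : p * (2*(k:ℤ)) = 2*(p*k) := by ring
    rw [hpk]
    linarith
  · have hπC : (Real.pi : ℂ) ≠ 0 := Complex.ofReal_ne_zero.mpr hπ.ne'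
    have hsub : (π : ℂ) * (ρ - star ρ) = (N : ℂ) * I := by
      calc (π:ℂ) * (ρ - star ρ) = (π:ℂ) * ((2 * ρ.im : ℝ) * I) := by
            rw [show (star ρ) = (starRingEnd ℂ) ρ from rfl, Complex.sub_conj]
        _ = (N:ℂ) * I := by
            rw [him]
            push_cast
            field_simp
    have hNC : (N : ℂ) = 2 * (k : ℂ) := by exact_mod_cast hk2
    have hmc : ((-(p * (N:ℤ) + (N:ℤ)/2 + l + n) : ℤ) : ℂ) = -((p:ℂ)*(N:ℂ) + (k:ℂ) + l + n) := by
      rw [hNd]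
      push_cast
      ring
    rw [hz, hmc]
    linear_combination (2*(p:ℂ)+1) * hsub + I * hNC

lemma pow_inj_lt_one {b : ℝ} (h0 : 0 < b) (h1 : b < 1) {i j : ℕ} (h : b ^ i = b ^ j) :
    i = j := by
  rcases lt_trichotomy i j with hij | hij | hij
  · have := pow_lt_pow_right_of_lt_one₀ h0 h1 hij
    linarith
  · exact hij
  · have := pow_lt_pow_right_of_lt_one₀ h0 h1 hij
    linarith

end Stmt14Aux

open Stmt14Aux Filter Topology

/-- Every zero `z = (2p+1)πρ + i(2l+n) − r` of `B` with `Im z ≤ 0` is also a zero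
of `A`: it can be rewritten as `z = (2p+1)π conj ρ − i(2m+n) − r` with
`m = −(pN + N/2 + l + n) ∈ ℤ≥0`.  Consequently `A/B` extends holomorphically to
the open lower half-plane. -/
theorem stmt14 (ρ : ℂ) (N : ℕ) (hN : Even N) (hN0 : 0 < N) (hre : ρ.re < 0)
    (him : ρ.im = N / (2 * π)) (n : ℤ) (r : ℝ) (A B : ℂ → ℂ)
    (hA : ∀ t : ℂ,
      A t = ∏' k : ℕ, (1 + Complex.exp ((2 * (k : ℂ) + n - I * (t + r)) / star ρ)))
    (hB : ∀ t : ℂ,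
      B t = ∏' k : ℕ, (1 + Complex.exp ((2 * (k : ℂ) + n + I * (t + r)) / ρ))) :
    (∀ (p l : ℤ), 0 ≤ l → ∀ z : ℂ,
      z = (2 * (p : ℂ) + 1) * (π : ℂ) * ρ + I * (2 * (l : ℂ) + n) - r → z.im ≤ 0 →
      (0 : ℤ) ≤ -(p * (N : ℤ) + (N : ℤ) / 2 + l + n) ∧
      z = (2 * (p : ℂ) + 1) * (π : ℂ) * star ρ -
            I * (2 * ((-(p * (N : ℤ) + (N : ℤ) / 2 + l + n) : ℤ) : ℂ) + n) - r) ∧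
    (∃ g : ℂ → ℂ, DifferentiableOn ℂ g {t : ℂ | t.im < 0} ∧
      ∀ t : ℂ, t.im < 0 → B t ≠ 0 → g t = A t / B t) := by
  refine ⟨key ρ N hN hN0 him n r, ?_⟩
  -- basic nonvanishing
  have hρ0 : ρ ≠ 0 := by
    intro h
    rw [h] at hre
    simp at hre
  have hsρ0 : star ρ ≠ 0 := star_ne_zero.mpr hρ0
  have hπ : (0:ℝ) < π := Real.pi_pos
  -- the two nomes
  set qB : ℂ := Complex.exp (2 / ρ) with hqBdef
  set qA : ℂ := Complex.exp (2 / star ρ) with hqAdef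
  have hnsq : 0 < Complex.normSq ρ := Complex.normSq_pos.mpr hρ0
  have hqB : ‖qB‖ < 1 := by
    rw [hqBdef, Complex.norm_exp, Real.exp_lt_one_iff]
    rw [Complex.div_re]
    have h2re : (2:ℂ).re = 2 := by norm_num
    have h2im : (2:ℂ).im = 0 := by norm_num
    rw [h2re, h2im]
    have : (2:ℝ) * ρ.re / Complex.normSq ρ < 0 := div_neg_of_neg_of_pos (by linarith) hnsq
    simpa using this
  have hqA : ‖qA‖ < 1 := by
    rw [hqAdef, Complex.norm_exp, Real.exp_lt_one_iff]
    rw [Complex.div_re]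
    have h1 : (star ρ).re = ρ.re := by simp [Complex.star_def]
    have h2 : Complex.normSq (star ρ) = Complex.normSq ρ := by simp [Complex.star_def]
    have h2re : (2:ℂ).re = 2 := by norm_num
    have h2im : (2:ℂ).im = 0 := by norm_num
    rw [h2re, h2im, h1, h2]
    have : (2:ℝ) * ρ.re / Complex.normSq ρ < 0 := div_neg_of_neg_of_pos (by linarith) hnsq
    simpa using this
  have hqB0 : qB ≠ 0 := Complex.exp_ne_zero _
  have hqA0 : qA ≠ 0 := Complex.exp_ne_zero _
  -- the entire "variables"
  set uB : ℂ → ℂ := fun t => Complex.exp ((n + I * (t + r)) / ρ) with huBdef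
  set uA : ℂ → ℂ := fun t => Complex.exp ((n - I * (t + r)) / star ρ) with huAdef
  have huB0 : ∀ t, uB t ≠ 0 := fun t => Complex.exp_ne_zero _
  have huA0 : ∀ t, uA t ≠ 0 := fun t => Complex.exp_ne_zero _
  set εone : ℕ → ℂ := fun _ => (1:ℂ) with hεonedef
  have hεone : ∀ k, ‖εone k‖ ≤ 1 := fun k => by simp [hεonedef]
  -- factor identification
  have hfactB : ∀ (t : ℂ) (k : ℕ),
      Complex.exp ((2 * (k : ℂ) + n + I * (t + r)) / ρ) = qB ^ k * uB t := by
    intro t k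
    rw [hqBdef, huBdef, ← Complex.exp_nat_mul, ← Complex.exp_add]
    congr 1
    field_simp
    ring
  have hfactA : ∀ (t : ℂ) (k : ℕ),
      Complex.exp ((2 * (k : ℂ) + n - I * (t + r)) / star ρ) = qA ^ k * uA t := by
    intro t k
    rw [hqAdef, huAdef, ← Complex.exp_nat_mul, ← Complex.exp_add]
    congr 1
    field_simp
    ring
  have hB' : ∀ t, B t = ∏' k : ℕ, ((1:ℂ) + εone k * qB ^ k * uB t) := by
    intro t
    rw [hB t]
    refine tprod_congr fun k => ?_
    rw [hfactB t k, hεonedef]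
    ring
  have hA' : ∀ t, A t = ∏' k : ℕ, ((1:ℂ) + εone k * qA ^ k * uA t) := by
    intro t
    rw [hA t]
    refine tprod_congr fun k => ?_
    rw [hfactA t k, hεonedef]
    ring
  -- differentiability of A and B
  have huBdiff : Differentiable ℂ uB := by
    apply Differentiable.cexp
    apply Differentiable.div_const
    exact (differentiable_const _).add ((differentiable_id.add_const _).const_mul I)
  have huAdiff : Differentiable ℂ uA := by
    apply Differentiable.cexp
    apply Differentiable.div_const
    exact (differentiable_const _).sub ((differentiable_id.add_const _).const_mul I)
  have hBdiff : Differentiable ℂ B := by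
    have : B = (fun x : ℂ => ∏' k : ℕ, ((1:ℂ) + εone k * qB ^ k * x)) ∘ uB :=
      funext fun t => hB' t
    rw [this]
    exact (differentiable_tprod hqB εone hεone).comp huBdiff
  have hAdiff : Differentiable ℂ A := by
    have : A = (fun x : ℂ => ∏' k : ℕ, ((1:ℂ) + εone k * qA ^ k * x)) ∘ uA :=
      funext fun t => hA' t
    rw [this]
    exact (differentiable_tprod hqA εone hεone).comp huAdiff
  -- the candidate extension
  refine ⟨fun t => limUnder (𝓝[≠] t) (fun s => A s / B s), ?_, ?_⟩
  swap
  · -- agreement with A/B off the zero set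
    intro t _ hBt
    have hcont : ContinuousAt (fun s => A s / B s) t :=
      (hAdiff t).continuousAt.div (hBdiff t).continuousAt hBt
    exact (hcont.tendsto.mono_left nhdsWithin_le_nhds).limUnder_eq
  · -- differentiability
    have hP1 : ∀ t, B t ≠ 0 → limUnder (𝓝[≠] t) (fun s => A s / B s) = A t / B t := by
      intro t hBt
      have hcont : ContinuousAt (fun s => A s / B s) t :=
        (hAdiff t).continuousAt.div (hBdiff t).continuousAt hBt
      exact (hcont.tendsto.mono_left nhdsWithin_le_nhds).limUnder_eq
    intro t₀ ht₀mem
    have ht₀im : t₀.im < 0 := ht₀mem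
    apply DifferentiableAt.differentiableWithinAt
    by_cases hBt₀ : B t₀ ≠ 0
    · -- easy case
      have hev : ∀ᶠ t in 𝓝 t₀, B t ≠ 0 := (hBdiff t₀).continuousAt.eventually_ne hBt₀
      have heqv : (fun t => limUnder (𝓝[≠] t) (fun s => A s / B s)) =ᶠ[𝓝 t₀]
          (fun t => A t / B t) := hev.mono fun t ht => hP1 t ht
      exact heqv.differentiableAt_iff.mpr (((hAdiff t₀).div (hBdiff t₀) hBt₀))
    · push_neg at hBt₀
      -- find the vanishing factor of B
      have h0 : (∏' k : ℕ, ((1:ℂ) + εone k * qB ^ k * uB t₀)) = 0 := by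
        rw [← hB' t₀]; exact hBt₀
      obtain ⟨k₀, hk₀⟩ := exists_factor_zero hqB εone hεone (uB t₀) h0
      have hk₀' : (1:ℂ) + qB ^ k₀ * uB t₀ = 0 := by
        rw [hεonedef] at hk₀
        simpa using hk₀
      have hFexp : Complex.exp ((2 * (k₀ : ℂ) + n + I * (t₀ + r)) / ρ) = -1 := by
        rw [hfactB t₀ k₀]
        linear_combination hk₀'
      obtain ⟨p, hp⟩ := exp_eq_neg_one_iff.mp hFexp
      rw [div_eq_iff hρ0] at hp
      have ht₀eq : t₀ = (2 * (p:ℂ) + 1) * (π:ℂ) * ρ + I * (2 * (k₀:ℂ) + n) - r := by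
        linear_combination (-I) * hp +
          (t₀ - 2*(p:ℂ)*(π:ℂ)*ρ - (π:ℂ)*ρ + (r:ℂ)) * Complex.I_sq
      have ht₀eq' : t₀ = (2 * (p:ℂ) + 1) * (π:ℂ) * ρ + I * (2 * (((k₀:ℤ)):ℂ) + n) - r := by
        rw [Int.cast_natCast]
        exact ht₀eq
      obtain ⟨hm0, ht₀'⟩ := key ρ N hN hN0 him n r p (k₀:ℤ) (Int.natCast_nonneg k₀) t₀
        ht₀eq' ht₀im.le
      set m : ℤ := -(p * (N:ℤ) + (N:ℤ)/2 + (k₀:ℤ) + n) with hmdef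
      set m₀ : ℕ := m.toNat with hm₀def
      have hm₀ : (m₀ : ℤ) = m := Int.toNat_of_nonneg hm0
      have hm₀C : (m₀ : ℂ) = ((m:ℤ) : ℂ) := by exact_mod_cast congrArg (Int.cast : ℤ → ℂ) hm₀
      -- the matching zero factor of A
      have hGexp : Complex.exp ((2 * (m₀ : ℂ) + n - I * (t₀ + r)) / star ρ) = -1 := by
        apply exp_eq_neg_one_iff.mpr ⟨-p - 1, ?_⟩
        rw [div_eq_iff hsρ0, hm₀C]
        push_cast
        linear_combination (-I) * ht₀' + (2*(m:ℂ) + (n:ℂ)) * Complex.I_sq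
      have hG0 : (1:ℂ) + qA ^ m₀ * uA t₀ = 0 := by
        rw [← hfactA t₀ m₀, hGexp]
        ring
      -- uniqueness of vanishing factors
      have hqBpos : (0:ℝ) < ‖qB‖ := norm_pos_iff.mpr hqB0
      have hqApos : (0:ℝ) < ‖qA‖ := norm_pos_iff.mpr hqA0
      have huniqB : ∀ k : ℕ, k ≠ k₀ → (1:ℂ) + qB ^ k * uB t₀ ≠ 0 := by
        intro k hk hzero
        apply hk
        have h1 : qB ^ k * uB t₀ = qB ^ k₀ * uB t₀ := by
          have e1 : qB ^ k * uB t₀ = -1 := by linear_combination hzero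
          have e2 : qB ^ k₀ * uB t₀ = -1 := by linear_combination hk₀'
          rw [e1, e2]
        have h2 : qB ^ k = qB ^ k₀ := mul_right_cancel₀ (huB0 t₀) h1
        have h3 : ‖qB‖ ^ k = ‖qB‖ ^ k₀ := by rw [← norm_pow, ← norm_pow, h2]
        exact pow_inj_lt_one hqBpos hqB h3
      have huniqA : ∀ k : ℕ, k ≠ m₀ → (1:ℂ) + qA ^ k * uA t₀ ≠ 0 := by
        intro k hk hzero
        apply hk
        have h1 : qA ^ k * uA t₀ = qA ^ m₀ * uA t₀ := by
          have e1 : qA ^ k * uA t₀ = -1 := by linear_combination hzero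
          have e2 : qA ^ m₀ * uA t₀ = -1 := by linear_combination hG0
          rw [e1, e2]
        have h2 : qA ^ k = qA ^ m₀ := mul_right_cancel₀ (huA0 t₀) h1
        have h3 : ‖qA‖ ^ k = ‖qA‖ ^ m₀ := by rw [← norm_pow, ← norm_pow, h2]
        exact pow_inj_lt_one hqApos hqA h3
      -- local factorizations
      set Fc : ℂ → ℂ := fun t => 1 + εone k₀ * qB ^ k₀ * uB t with hFcdef
      set Gc : ℂ → ℂ := fun t => 1 + εone m₀ * qA ^ m₀ * uA t with hGcdef
      set εB : ℕ → ℂ := fun k => if k = k₀ then 0 else εone k with hεBdef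
      set εA : ℕ → ℂ := fun k => if k = m₀ then 0 else εone k with hεAdef
      have hεB : ∀ k, ‖εB k‖ ≤ 1 := by
        intro k
        rw [hεBdef]
        by_cases h : k = k₀
        · simp [h]
        · simpa [h] using hεone k
      have hεA : ∀ k, ‖εA k‖ ≤ 1 := by
        intro k
        rw [hεAdef]
        by_cases h : k = m₀
        · simp [h]
        · simpa [h] using hεone k
      set U : ℂ → ℂ := fun t => ∏' k : ℕ, ((1:ℂ) + εB k * qB ^ k * uB t) with hUdef
      set V : ℂ → ℂ := fun t => ∏' k : ℕ, ((1:ℂ) + εA k * qA ^ k * uA t) with hVdef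
      have hBsplit : ∀ t, B t = Fc t * U t := by
        intro t
        rw [hB' t, hUdef, hFcdef, hεBdef]
        exact tprod_split hqB εone hεone (uB t) k₀
      have hAsplit : ∀ t, A t = Gc t * V t := by
        intro t
        rw [hA' t, hVdef, hGcdef, hεAdef]
        exact tprod_split hqA εone hεone (uA t) m₀
      have hU0 : U t₀ ≠ 0 := by
        rw [hUdef]
        apply tprod_ne_zero hqB εB hεB (uB t₀)
        intro k
        rw [hεBdef]
        by_cases h : k = k₀
        · simp [h]
        · simpa [h, hεonedef] using huniqB k h
      have hV0 : V t₀ ≠ 0 := by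
        rw [hVdef]
        apply tprod_ne_zero hqA εA hεA (uA t₀)
        intro k
        rw [hεAdef]
        by_cases h : k = m₀
        · simp [h]
        · simpa [h, hεonedef] using huniqA k h
      have hUdiff : Differentiable ℂ U := by
        have : U = (fun x : ℂ => ∏' k : ℕ, ((1:ℂ) + εB k * qB ^ k * x)) ∘ uB := rfl
        rw [this]
        exact (differentiable_tprod hqB εB hεB).comp huBdiff
      have hVdiff : Differentiable ℂ V := by
        have : V = (fun x : ℂ => ∏' k : ℕ, ((1:ℂ) + εA k * qA ^ k * x)) ∘ uA := rfl
        rw [this]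
        exact (differentiable_tprod hqA εA hεA).comp huAdiff
      have hFdiff : Differentiable ℂ Fc :=
        (differentiable_const _).add (huBdiff.const_mul _)
      have hGdiff : Differentiable ℂ Gc :=
        (differentiable_const _).add (huAdiff.const_mul _)
      have hFz : Fc t₀ = 0 := by
        rw [hFcdef]; simpa [hεonedef] using hk₀'
      have hGz : Gc t₀ = 0 := by
        rw [hGcdef]; simpa [hεonedef] using hG0
      -- the derivative of Fc at t₀ is nonzero
      have hwB : HasDerivAt (fun t : ℂ => ((n:ℂ) + I * (t + r)) / ρ) (I * 1 / ρ) t₀ :=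
        ((((hasDerivAt_id t₀).add_const (r:ℂ)).const_mul I).const_add (n:ℂ)).div_const ρ
      have huBD : HasDerivAt uB (Complex.exp (((n:ℂ) + I * (t₀ + r)) / ρ) * (I * 1 / ρ)) t₀ :=
        hwB.cexp
      have hFD : HasDerivAt Fc
          (εone k₀ * qB ^ k₀ * (Complex.exp (((n:ℂ) + I * (t₀ + r)) / ρ) * (I * 1 / ρ))) t₀ :=
        (huBD.const_mul _).const_add 1
      have hFderiv : deriv Fc t₀ ≠ 0 := by
        rw [hFD.deriv]
        simp only [hεonedef, one_mul]
        apply mul_ne_zero (pow_ne_zero _ hqB0)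
        apply mul_ne_zero (Complex.exp_ne_zero _)
        rw [mul_one]
        exact div_ne_zero I_ne_zero hρ0
      -- isolated zeros of Fc
      have hFev : ∀ᶠ t in 𝓝[≠] t₀, Fc t ≠ 0 := by
        rcases ((hFdiff.analyticAt t₀)).eventually_eq_zero_or_eventually_ne_zero with h | h
        · exfalso
          apply hFderiv
          have : deriv Fc t₀ = deriv (fun _ : ℂ => (0:ℂ)) t₀ :=
            Filter.EventuallyEq.deriv_eq h
          rw [this, deriv_const]
        · exact h
      -- dslopes
      set dF : ℂ → ℂ := dslope Fc t₀ with hdFdef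
      set dG : ℂ → ℂ := dslope Gc t₀ with hdGdef
      have hdFdiff : Differentiable ℂ dF := by
        rw [← differentiableOn_univ]
        exact (differentiableOn_dslope Filter.univ_mem).mpr hFdiff.differentiableOn
      have hdGdiff : Differentiable ℂ dG := by
        rw [← differentiableOn_univ]
        exact (differentiableOn_dslope Filter.univ_mem).mpr hGdiff.differentiableOn
      have hdF0 : dF t₀ ≠ 0 := by
        rw [hdFdef, dslope_same]
        exact hFderiv
      -- the local holomorphic extension
      set W : ℂ → ℂ := fun t => (dG t * V t) / (dF t * U t) with hWdef
      have hWdiffAt : DifferentiableAt ℂ W t₀ :=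
        ((hdGdiff t₀).mul (hVdiff t₀)).div ((hdFdiff t₀).mul (hUdiff t₀))
          (mul_ne_zero hdF0 hU0)
      -- punctured-neighbourhood equality
      have hFfac : ∀ t : ℂ, Fc t = (t - t₀) * dF t := by
        intro t
        have := sub_smul_dslope Fc t₀ t
        rw [smul_eq_mul] at this
        rw [hdFdef, this, hFz, sub_zero]
      have hGfac : ∀ t : ℂ, Gc t = (t - t₀) * dG t := by
        intro t
        have := sub_smul_dslope Gc t₀ t
        rw [smul_eq_mul] at this
        rw [hdGdef, this, hGz, sub_zero]
      have hUev : ∀ᶠ t in 𝓝 t₀, U t ≠ 0 := (hUdiff t₀).continuousAt.eventually_ne hU0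
      have hVev : ∀ᶠ t in 𝓝 t₀, V t ≠ 0 := (hVdiff t₀).continuousAt.eventually_ne hV0
      have hdFev : ∀ᶠ t in 𝓝 t₀, dF t ≠ 0 := (hdFdiff t₀).continuousAt.eventually_ne hdF0
      have himev : ∀ᶠ t in 𝓝 t₀, t.im < 0 := by
        have : IsOpen {t : ℂ | t.im < 0} := isOpen_lt Complex.continuous_im continuous_const
        exact this.eventually_mem ht₀im
      have hevent : ∀ᶠ t in 𝓝[≠] t₀, B t ≠ 0 ∧ A t / B t = W t := by
        filter_upwards [hFev, hUev.filter_mono nhdsWithin_le_nhds,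
          hVev.filter_mono nhdsWithin_le_nhds, hdFev.filter_mono nhdsWithin_le_nhds,
          self_mem_nhdsWithin] with t hF hU hV hdF ht
        have htne : t - t₀ ≠ 0 := sub_ne_zero.mpr ht
        constructor
        · rw [hBsplit t]
          exact mul_ne_zero hF hU
        · rw [hAsplit t, hBsplit t, hGfac t, hFfac t, hWdef]
          have e1 : (t - t₀) * dG t * V t = (t - t₀) * (dG t * V t) := by ring
          have e2 : (t - t₀) * dF t * U t = (t - t₀) * (dF t * U t) := by ring
          rw [e1, e2]
          exact mul_div_mul_left _ _ htne
      have htend : Tendsto (fun s => A s / B s) (𝓝[≠] t₀) (𝓝 (W t₀)) := by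
        have hWt : Tendsto W (𝓝[≠] t₀) (𝓝 (W t₀)) :=
          hWdiffAt.continuousAt.tendsto.mono_left nhdsWithin_le_nhds
        apply hWt.congr'
        exact hevent.mono fun t ht => ht.2.symm
      have hgt₀ : limUnder (𝓝[≠] t₀) (fun s => A s / B s) = W t₀ := htend.limUnder_eq
      have hev2 : (fun t => limUnder (𝓝[≠] t) (fun s => A s / B s)) =ᶠ[𝓝 t₀] W := by
        have hevent' : ∀ᶠ t in 𝓝 t₀, t ≠ t₀ → (B t ≠ 0 ∧ A t / B t = W t) := by
          have := hevent
          rw [eventually_nhdsWithin_iff] at this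
          simpa using this
        filter_upwards [hevent'] with t ht
        by_cases h : t = t₀
        · rw [h]
          exact hgt₀
        · obtain ⟨hB0, hAB⟩ := ht h
          rw [hP1 t hB0, hAB]
      exact hev2.differentiableAt_iff.mpr hWdiffAt
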